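/- arXiv:2410.12935 — 3 statements merged into one kernel-verified Lean document; each statement's English description precedes it below -/
import Mathlib

section
/- The function p(t) = (2/π) ln|coth(π t / 2)| integrates to 1 over the real line: ∫_ℝ p(t) dt = 1. -/
open MeasureTheory Set Real

/-- The hyperbolic cotangent. -/
noncomputable def Real.coth (x : ℝ) : ℝ := Real.cosh x / Real.sinh x

lemma hasSum_odd_sq_inv :
    HasSum (fun k : ℕ => (1:ℝ) / (2 * (k:ℝ) + 1) ^ 2) (π ^ 2 / 8) := by
  have h := hasSum_zeta_two
  have h4 := h.mul_left (4⁻¹ : ℝ)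
  have heq : (fun n : ℕ => (4⁻¹:ℝ) * (1 / (n:ℝ) ^ 2))
      = fun k : ℕ => (1:ℝ) / ((2 * k : ℕ) : ℝ) ^ 2 := by
    funext k
    push_cast
    rcases eq_or_ne (k:ℝ) 0 with hk | hk
    · simp [hk]
    · field_simp
      ring
  rw [heq] at h4
  have hinj : Function.Injective (fun k : ℕ => 2 * k + 1) := by
    intro a b hab; dsimp at hab; omega
  have hodd_sum : Summable ((fun n : ℕ => (1:ℝ) / (n:ℝ) ^ 2) ∘ fun k : ℕ => 2 * k + 1) :=
    h.summable.comp_injective hinj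
  rw [Function.comp_def] at hodd_sum
  have hodd := hodd_sum.hasSum
  have htot := HasSum.even_add_odd (f := fun n : ℕ => (1:ℝ) / (n:ℝ) ^ 2) h4 hodd
  have huniq := h.unique htot
  have h8 : ∑' k : ℕ, (1:ℝ) / ((2 * k + 1 : ℕ) : ℝ) ^ 2 = π ^ 2 / 8 := by
    have hpi : (4⁻¹ : ℝ) * (π ^ 2 / 6) + ∑' k : ℕ, (1:ℝ) / ((2 * k + 1 : ℕ) : ℝ) ^ 2
        = π ^ 2 / 6 := huniq.symm
    linarith
  rw [h8] at hodd
  have hfun : (fun k : ℕ => (1:ℝ) / ((2 * k + 1 : ℕ) : ℝ) ^ 2)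
      = fun k : ℕ => (1:ℝ) / (2 * (k:ℝ) + 1) ^ 2 := by
    funext k
    push_cast
    ring
  rwa [hfun] at hodd

lemma coth_eq (u : ℝ) :
    Real.coth u = (1 + Real.exp (-2 * u)) / (1 - Real.exp (-2 * u)) := by
  rw [Real.coth, Real.cosh_eq, Real.sinh_eq]
  have h1 : Real.exp u ≠ 0 := (Real.exp_pos u).ne'
  rw [show (-2 * u : ℝ) = -(u + u) by ring, Real.exp_neg (u + u), Real.exp_add,
    Real.exp_neg]
  field_simp

lemma coth_pos {u : ℝ} (hu : 0 < u) : 0 < Real.coth u := by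
  rw [Real.coth]
  have h1 : 0 < Real.sinh u := Real.sinh_pos_iff.mpr hu
  have h2 : 0 < Real.cosh u := Real.cosh_pos u
  positivity

lemma log_coth_hasSum {u : ℝ} (hu : 0 < u) :
    HasSum (fun k : ℕ => (2:ℝ) * (1 / (2 * (k:ℝ) + 1)) * Real.exp (-(2 * (2 * (k:ℝ) + 1)) * u))
      (Real.log (Real.coth u)) := by
  have hxpos : (0:ℝ) < Real.exp (-2 * u) := Real.exp_pos _
  have hxlt : Real.exp (-2 * u) < 1 := by
    rw [Real.exp_lt_one_iff]
    linarith
  have hx1 : |Real.exp (-2 * u)| < 1 := by rwa [abs_of_pos hxpos]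
  have h := Real.hasSum_log_sub_log_of_abs_lt_one hx1
  have hlog : Real.log (Real.coth u)
      = Real.log (1 + Real.exp (-2 * u)) - Real.log (1 - Real.exp (-2 * u)) := by
    rw [coth_eq u, Real.log_div (by positivity) (by nlinarith)]
  rw [hlog]
  convert h using 2 with k
  rw [← Real.exp_nat_mul]
  congr 1
  push_cast
  ring

lemma integral_log_coth_Ioi : ∫ u in Ioi (0:ℝ), Real.log (Real.coth u) = π ^ 2 / 8 := by
  have key : ∀ k : ℕ, ∫ u in Ioi (0:ℝ),
      (2:ℝ) * (1 / (2 * (k:ℝ) + 1)) * Real.exp (-(2 * (2 * (k:ℝ) + 1)) * u)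
      = 1 / (2 * (k:ℝ) + 1) ^ 2 := by
    intro k
    have hc : (0:ℝ) < 2 * (2 * (k:ℝ) + 1) := by positivity
    rw [MeasureTheory.integral_const_mul]
    have heq : ∀ u : ℝ, Real.exp (-(2 * (2 * (k:ℝ) + 1)) * u)
        = (fun x => Real.exp (-x)) (2 * (2 * (k:ℝ) + 1) * u) := by
      intro u; simp [neg_mul]
    simp_rw [heq]
    rw [integral_comp_mul_left_Ioi (fun x => Real.exp (-x)) 0 hc, mul_zero,
      integral_exp_neg_Ioi_zero, smul_eq_mul]
    have h1 : 2 * (k:ℝ) + 1 ≠ 0 := by positivity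
    field_simp
  have hint : ∀ k : ℕ, Integrable
      (fun u => (2:ℝ) * (1 / (2 * (k:ℝ) + 1)) * Real.exp (-(2 * (2 * (k:ℝ) + 1)) * u))
      (volume.restrict (Ioi (0:ℝ))) := by
    intro k
    exact ((exp_neg_integrableOn_Ioi 0 (by positivity : (0:ℝ) < 2 * (2 * (k:ℝ) + 1)))).const_mul _
  have hnorm : ∀ k : ℕ, ∫ u in Ioi (0:ℝ),
      ‖(2:ℝ) * (1 / (2 * (k:ℝ) + 1)) * Real.exp (-(2 * (2 * (k:ℝ) + 1)) * u)‖
      = 1 / (2 * (k:ℝ) + 1) ^ 2 := by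
    intro k
    rw [← key k]
    apply setIntegral_congr_fun measurableSet_Ioi
    intro u _
    simp only [Real.norm_eq_abs]
    rw [abs_of_nonneg (by positivity)]
  have hsum : Summable fun k : ℕ => ∫ u in Ioi (0:ℝ),
      ‖(2:ℝ) * (1 / (2 * (k:ℝ) + 1)) * Real.exp (-(2 * (2 * (k:ℝ) + 1)) * u)‖ := by
    simp_rw [hnorm]
    exact hasSum_odd_sq_inv.summable
  have hswap := MeasureTheory.integral_tsum_of_summable_integral_norm hint hsum
  have heq2 : ∫ u in Ioi (0:ℝ), Real.log (Real.coth u)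
      = ∫ u in Ioi (0:ℝ),
        ∑' k : ℕ, (2:ℝ) * (1 / (2 * (k:ℝ) + 1)) * Real.exp (-(2 * (2 * (k:ℝ) + 1)) * u) := by
    apply setIntegral_congr_fun measurableSet_Ioi
    intro u hu
    exact ((log_coth_hasSum hu).tsum_eq).symm
  rw [heq2, ← hswap]
  simp_rw [key]
  exact hasSum_odd_sq_inv.tsum_eq

theorem highPeakTent_integral_eq_one :
    ∫ t : ℝ, (2 / Real.pi) * Real.log |Real.coth (Real.pi * t / 2)| = 1 := by
  have hπ : (0:ℝ) < π := Real.pi_pos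
  have habs : ∀ t : ℝ, |Real.coth (π * t / 2)| = |Real.coth (π * |t| / 2)| := by
    intro t
    rcases abs_cases t with ⟨h, _⟩ | ⟨h, _⟩
    · rw [h]
    · rw [h]
      have he : π * -t / 2 = -(π * t / 2) := by ring
      rw [he, Real.coth, Real.coth, Real.cosh_neg, Real.sinh_neg, div_neg, abs_neg]
  have step1 : (∫ t : ℝ, (2 / π) * Real.log |Real.coth (π * t / 2)|)
      = 2 * ∫ t in Ioi (0:ℝ), (2 / π) * Real.log |Real.coth (π * t / 2)| := by
    rw [← integral_comp_abs (f := fun s : ℝ => (2 / π) * Real.log |Real.coth (π * s / 2)|)]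
    congr 1
    funext t
    rw [habs t]
  rw [step1]
  have step2 : ∫ t in Ioi (0:ℝ), (2 / π) * Real.log |Real.coth (π * t / 2)|
      = (2 / π) * ∫ t in Ioi (0:ℝ), Real.log |Real.coth (π * t / 2)| :=
    MeasureTheory.integral_const_mul _ _
  rw [step2]
  have step3 : ∫ t in Ioi (0:ℝ), Real.log |Real.coth (π * t / 2)|
      = (π / 2)⁻¹ * ∫ u in Ioi (0:ℝ), Real.log |Real.coth u| := by
    have h2 : (0:ℝ) < π / 2 := by linarith
    have heq : ∀ t : ℝ, Real.log |Real.coth (π * t / 2)|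
        = (fun u => Real.log |Real.coth u|) (π / 2 * t) := by
      intro t; congr 2; ring
    simp_rw [heq]
    rw [integral_comp_mul_left_Ioi (fun u => Real.log |Real.coth u|) 0 h2, mul_zero,
      smul_eq_mul]
  rw [step3]
  have step4 : ∫ u in Ioi (0:ℝ), Real.log |Real.coth u| = π ^ 2 / 8 := by
    rw [← integral_log_coth_Ioi]
    apply setIntegral_congr_fun measurableSet_Ioi
    intro u hu
    show Real.log |Real.coth u| = Real.log (Real.coth u)
    rw [abs_of_pos (coth_pos hu)]
  rw [step4]
  field_simp
  ring
end

section
/- Duhamel's formula: for a differentiable matrix-valued function A(x) on ℝ, the derivative of the matrix exponential satisfies d/dx e^{A(x)} = ∫₀¹ e^{(1-u)A(x)} (dA(x)/dx) e^{u A(x)} du. -/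
open scoped Matrix.Norms.L2Operator
open Topology Filter

lemma hasDerivAt_exp_usmul {n : ℕ} (M : Matrix (Fin n) (Fin n) ℂ) (u : ℝ) :
    HasDerivAt (fun v : ℝ => NormedSpace.exp ((v:ℂ) • M))
      (NormedSpace.exp ((u:ℂ) • M) * M) u :=
  by exact (HasDerivAt.scomp u (hasDerivAt_exp_smul_const (𝕂 := ℂ) M ((u:ℂ)))
      Complex.ofRealCLM.hasDerivAt).congr_deriv (by simp)

lemma duhamel_key {n : ℕ} (B C : Matrix (Fin n) (Fin n) ℂ) :
    NormedSpace.exp C - NormedSpace.exp B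
      = ∫ u in (0:ℝ)..1,
          NormedSpace.exp ((1 - u : ℂ) • B) * (C - B) * NormedSpace.exp ((u : ℂ) • C) := by
  have hf : ∀ u ∈ Set.uIcc (0:ℝ) 1,
      HasDerivAt (fun v : ℝ => NormedSpace.exp ((1 - v : ℂ) • B) * NormedSpace.exp ((v:ℂ) • C))
        (NormedSpace.exp ((1 - u : ℂ) • B) * (C - B) * NormedSpace.exp ((u : ℂ) • C)) u := by
    intro u _
    have h1 : HasDerivAt (fun v : ℝ => NormedSpace.exp ((1 - v : ℂ) • B))
        (-(NormedSpace.exp ((1 - u : ℂ) • B) * B)) u := by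
      have := ((hasDerivAt_exp_usmul B (1 - u)).comp_const_sub 1 u)
      simpa using this
    have hcomm : Commute C (NormedSpace.exp ((u:ℂ) • C)) :=
      ((Commute.refl C).smul_right ((u:ℂ))).exp_right
    have h2 := hasDerivAt_exp_usmul C u
    have := h1.mul h2
    refine this.congr_deriv ?_
    rw [← hcomm.eq]
    noncomm_ring
  have hc : Continuous (fun u : ℝ =>
      NormedSpace.exp ((1 - u : ℂ) • B) * (C - B) * NormedSpace.exp ((u : ℂ) • C)) := by
    letI : NormedAlgebra ℚ (Matrix (Fin n) (Fin n) ℂ) := NormedAlgebra.restrictScalars ℚ ℂ _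
    apply Continuous.mul
    · apply Continuous.mul
      · exact NormedSpace.exp_continuous.comp
          ((continuous_const.sub Complex.continuous_ofReal).smul continuous_const)
      · exact continuous_const
    · exact NormedSpace.exp_continuous.comp (Complex.continuous_ofReal.smul continuous_const)
  have := intervalIntegral.integral_eq_sub_of_hasDerivAt hf (hc.intervalIntegrable 0 1)
  rw [this]
  simp [NormedSpace.exp_zero]

theorem duhamel_formula (n : ℕ) (A : ℝ → Matrix (Fin n) (Fin n) ℂ)
    (hA : Differentiable ℝ A) (x : ℝ) (A' : Matrix (Fin n) (Fin n) ℂ)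
    (hA' : HasDerivAt A A' x) :
    HasDerivAt (fun y : ℝ => NormedSpace.exp (A y))
      (∫ u in (0:ℝ)..1,
        NormedSpace.exp ((1 - u : ℂ) • A x) * A' * NormedSpace.exp ((u : ℂ) • A x)) x := by
  classical
  set S : ℝ → Matrix (Fin n) (Fin n) ℂ :=
    fun y => if y = x then A' else (y - x)⁻¹ • (A y - A x) with hS
  have hSx : S x = A' := by simp [hS]
  have hslope : ∀ y ≠ x, S y = slope A x y := by
    intro y hy
    simp [hS, hy, slope_def_module]
  have hScont : Continuous S := by
    rw [continuous_iff_continuousAt]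
    intro y
    rcases eq_or_ne y x with rfl | hy
    · -- continuity at x via the derivative
      have h1 : Filter.Tendsto S (𝓝[≠] y) (𝓝 A') := by
        refine (hasDerivAt_iff_tendsto_slope.mp hA').congr' ?_
        filter_upwards [self_mem_nhdsWithin] with z hz
        exact (hslope z hz).symm
      have h2 : Filter.Tendsto S (pure y) (𝓝 A') := by
        have hy : S y = A' := by simp [hS]
        rw [← hy]
        exact tendsto_pure_nhds S y
      rw [ContinuousAt, hSx]
      rw [← nhdsNE_sup_pure y]
      exact h1.sup h2
    · have : ContinuousAt (fun z => (z - x)⁻¹ • (A z - A x)) y := by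
        exact ((continuousAt_id.sub continuousAt_const).inv₀ (sub_ne_zero.mpr hy)).smul
          ((hA.continuous.continuousAt).sub continuousAt_const)
      refine this.congr ?_
      filter_upwards [isOpen_ne.mem_nhds hy] with z hz
      simp [hS, hz]
  set G : ℝ → ℝ → Matrix (Fin n) (Fin n) ℂ :=
    fun y u => NormedSpace.exp ((1 - u : ℂ) • A x) * S y * NormedSpace.exp ((u : ℂ) • A y)
    with hG
  have hGcont : Continuous (Function.uncurry G) := by
    letI : NormedAlgebra ℚ (Matrix (Fin n) (Fin n) ℂ) := NormedAlgebra.restrictScalars ℚ ℂ _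
    apply Continuous.mul
    · apply Continuous.mul
      · exact NormedSpace.exp_continuous.comp
          ((continuous_const.sub (Complex.continuous_ofReal.comp continuous_snd)).smul
            continuous_const)
      · exact hScont.comp continuous_fst
    · exact NormedSpace.exp_continuous.comp
        ((Complex.continuous_ofReal.comp continuous_snd).smul
          (hA.continuous.comp continuous_fst))
  set F : ℝ → Matrix (Fin n) (Fin n) ℂ := fun y => ∫ u in (0:ℝ)..1, G y u with hF
  have hFcont : Continuous F :=
    intervalIntegral.continuous_parametric_intervalIntegral_of_continuous' hGcont 0 1
  have hFx : F x = ∫ u in (0:ℝ)..1,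
      NormedSpace.exp ((1 - u : ℂ) • A x) * A' * NormedSpace.exp ((u : ℂ) • A x) := by
    simp [hF, hG, hSx]
  rw [hasDerivAt_iff_tendsto_slope]
  rw [← hFx]
  have key : ∀ y ≠ x, slope (fun y : ℝ => NormedSpace.exp (A y)) x y = F y := by
    intro y hy
    rw [slope_def_module, duhamel_key (A x) (A y), hF]
    rw [← intervalIntegral.integral_smul]
    apply intervalIntegral.integral_congr
    intro u _
    simp only [hG]
    rw [hslope y hy, slope_def_module]
    simp only [mul_smul_comm, smul_mul_assoc]
  refine ((hFcont.continuousAt (x := x)).tendsto.mono_left nhdsWithin_le_nhds).congr' ?_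
  filter_upwards [self_mem_nhdsWithin] with y hy
  exact (key y hy).symm
end

section
/- ∫_ℝ |t| · (2/π) ln|coth(π t / 2)| dt ≤ 1; in particular the high-peak-tent density has a finite first absolute moment. -/
/-- The high-peak-tent probability density function. -/
noncomputable def highPeakTent (t : ℝ) : ℝ :=
  (2 / Real.pi) * Real.log |Real.coth (Real.pi * t / 2)|

open Real MeasureTheory Set

lemma abs_coth_eq (t : ℝ) :
    |Real.coth (π * t / 2)| = Real.cosh (π * |t| / 2) / Real.sinh (π * |t| / 2) := by
  have habs : |π * t / 2| = π * |t| / 2 := by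
    rw [abs_div, abs_mul, abs_of_pos Real.pi_pos, abs_two]
  rw [Real.coth, abs_div, abs_of_pos (Real.cosh_pos _), Real.abs_sinh, habs, ← habs,
    Real.cosh_abs]

lemma highPeakTent_nonneg (t : ℝ) : 0 ≤ highPeakTent t := by
  rcases eq_or_ne t 0 with rfl | ht
  · simp [highPeakTent, Real.coth, Real.sinh_zero]
  · have hu : 0 < π * |t| / 2 := by
      have := Real.pi_pos
      have : 0 < |t| := abs_pos.mpr ht
      positivity
    have hs : 0 < Real.sinh (π * |t| / 2) := Real.sinh_pos_iff.mpr hu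
    apply mul_nonneg (by positivity)
    apply Real.log_nonneg
    rw [abs_coth_eq]
    exact (one_le_div hs).mpr (Real.sinh_lt_cosh _).le

lemma highPeakTent_bound (t : ℝ) :
    |t| * highPeakTent t ≤ 4 / π ^ 2 * Real.exp (-(π / 2 * |t|)) := by
  rcases eq_or_ne t 0 with rfl | ht
  · simp [highPeakTent, Real.coth, Real.sinh_zero]
    positivity
  · set u : ℝ := π * |t| / 2 with hu_def
    have htpos : 0 < |t| := abs_pos.mpr ht
    have hπ := Real.pi_pos
    have hu : 0 < u := by positivity
    have hs : 0 < Real.sinh u := Real.sinh_pos_iff.mpr hu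
    have hlog : Real.log (Real.cosh u / Real.sinh u) ≤ Real.exp (-u) / Real.sinh u := by
      have h1 : Real.log (Real.cosh u / Real.sinh u) ≤ Real.cosh u / Real.sinh u - 1 :=
        Real.log_le_sub_one_of_pos (div_pos (Real.cosh_pos _) hs)
      have h2 : Real.cosh u / Real.sinh u - 1 = Real.exp (-u) / Real.sinh u := by
        have h3 := Real.cosh_sub_sinh u
        field_simp
        linarith
      linarith
    have hHP : highPeakTent t ≤ 2 / π * (Real.exp (-u) / Real.sinh u) := by
      unfold highPeakTent
      rw [abs_coth_eq]
      exact mul_le_mul_of_nonneg_left hlog (by positivity)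
    have hmain : |t| * (2 / π * (Real.exp (-u) / Real.sinh u)) ≤ 4 / π ^ 2 * Real.exp (-u) := by
      have ht_eq : |t| = 2 * u / π := by
        rw [hu_def]; field_simp
      rw [ht_eq, show 2 * u / π * (2 / π * (Real.exp (-u) / Real.sinh u)) =
        4 / π ^ 2 * Real.exp (-u) * (u / Real.sinh u) by field_simp; ring]
      exact mul_le_of_le_one_right (by positivity)
        ((div_le_one hs).mpr ((Real.self_lt_sinh_iff.mpr hu)).le)
    have hstep : |t| * highPeakTent t ≤ |t| * (2 / π * (Real.exp (-u) / Real.sinh u)) :=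
      mul_le_mul_of_nonneg_left hHP (abs_nonneg t)
    have huu : -u = -(π / 2 * |t|) := by rw [hu_def]; ring
    calc |t| * highPeakTent t ≤ 4 / π ^ 2 * Real.exp (-u) := le_trans hstep hmain
      _ = 4 / π ^ 2 * Real.exp (-(π / 2 * |t|)) := by rw [huu]

lemma g_integrable : Integrable (fun t : ℝ => 4 / π ^ 2 * Real.exp (-(π / 2 * |t|))) := by
  have hb : (0 : ℝ) < π / 2 := by positivity
  have h1 : IntegrableOn (fun t : ℝ => Real.exp (-(π / 2 * |t|))) (Ioi 0) := by
    refine (exp_neg_integrableOn_Ioi 0 hb).congr_fun (fun x hx => ?_) measurableSet_Ioi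
    rw [abs_of_pos hx]; congr 1; ring
  have h2 : IntegrableOn (fun t : ℝ => Real.exp (-(π / 2 * |t|))) (Iic 0) := by
    rw [← Measure.map_neg_eq_self (volume : Measure ℝ)]
    have m : MeasurableEmbedding fun x : ℝ => -x := (Homeomorph.neg ℝ).measurableEmbedding
    rw [m.integrableOn_map_iff]
    simp only [Function.comp_def, abs_neg, neg_preimage, neg_Iic, neg_zero]
    exact Iff.mpr integrableOn_Ici_iff_integrableOn_Ioi h1
  have : Integrable (fun t : ℝ => Real.exp (-(π / 2 * |t|))) := by
    rw [← integrableOn_univ, ← Iic_union_Ioi (a := (0:ℝ))]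
    exact h2.union h1
  exact this.const_mul _

lemma g_integral : ∫ t : ℝ, 4 / π ^ 2 * Real.exp (-(π / 2 * |t|)) = 16 / π ^ 3 := by
  have hb : (0 : ℝ) < π / 2 := by positivity
  rw [MeasureTheory.integral_const_mul]
  have h1 : ∫ t : ℝ, Real.exp (-(π / 2 * |t|)) = 2 * ∫ x in Ioi (0:ℝ), Real.exp (-(π / 2 * x)) :=
    integral_comp_abs (f := fun x => Real.exp (-(π / 2 * x)))
  have h2 : ∫ x in Ioi (0:ℝ), Real.exp (-(π / 2 * x)) = (π / 2)⁻¹ * 1 := by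
    have := integral_comp_mul_left_Ioi (fun x => Real.exp (-x)) 0 hb
    simp only [mul_zero, smul_eq_mul] at this
    rw [this, integral_exp_neg_Ioi_zero]
  rw [h1, h2]
  have hπ := Real.pi_pos
  field_simp
  ring

lemma f_measurable : Measurable (fun t : ℝ => |t| * highPeakTent t) := by
  unfold highPeakTent Real.coth
  exact measurable_abs.mul (measurable_const.mul ((Real.measurable_log.comp
    ((Real.continuous_cosh.measurable.comp (by fun_prop)).div
      (Real.continuous_sinh.measurable.comp (by fun_prop))).abs)))

theorem highPeakTent_first_absolute_moment :
    MeasureTheory.Integrable (fun t : ℝ => |t| * highPeakTent t) ∧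
    ∫ t : ℝ, |t| * highPeakTent t ≤ 1 := by
  have hnn : ∀ t : ℝ, 0 ≤ |t| * highPeakTent t :=
    fun t => mul_nonneg (abs_nonneg t) (highPeakTent_nonneg t)
  have hint : Integrable (fun t : ℝ => |t| * highPeakTent t) := by
    refine g_integrable.mono' f_measurable.aestronglyMeasurable (ae_of_all _ fun t => ?_)
    rw [Real.norm_eq_abs, abs_of_nonneg (hnn t)]
    exact highPeakTent_bound t
  refine ⟨hint, ?_⟩
  have h1 : ∫ t : ℝ, |t| * highPeakTent t ≤ ∫ t : ℝ, 4 / π ^ 2 * Real.exp (-(π / 2 * |t|)) :=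
    integral_mono hint g_integrable highPeakTent_bound
  rw [g_integral] at h1
  have hπ : (3:ℝ) < π := Real.pi_gt_three
  have : 16 / π ^ 3 ≤ 1 := by
    rw [div_le_one (by positivity)]
    nlinarith [hπ, sq_nonneg π, sq_nonneg (π - 3)]
  linarith
end
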